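/- arXiv:1401.8046 — 5 statements merged into one kernel-verified Lean document; each statement's English description precedes it below -/
import Mathlib

section
/- For all natural numbers k and m with m ≥ 2k + 1, all vertices s, t : Fin m, every binary relation E on Fin m, and every finite set F of ordered pairs of elements of Fin m with at most k elements, there exists a binary relation E' on Fin m that agrees with E on F and such that t is reachable from s under E', i.e. Relation.ReflTransGen E' s t holds. (This is the combinatorial content of the statement that the problem Reach is (2k+1, k)-uniform.) -/
theorem reach_uniform (k m : ℕ) (hm : 2 * k + 1 ≤ m) (s t : Fin m)
    (E : Fin m → Fin m → Prop) (F : Finset (Fin m × Fin m)) (hF : F.card ≤ k) :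
    ∃ E' : Fin m → Fin m → Prop,
      (∀ p ∈ F, (E' p.1 p.2 ↔ E p.1 p.2)) ∧ Relation.ReflTransGen E' s t := by
  classical
  set B : Finset (Fin m) :=
    (F.filter (fun p => p.1 = s)).image Prod.snd ∪
    (F.filter (fun p => p.2 = t)).image Prod.fst with hB
  have hcard : B.card < m := by
    have h1 : B.card ≤ F.card + F.card := by
      refine le_trans (Finset.card_union_le _ _) ?_
      gcongr <;> exact le_trans (Finset.card_image_le) (Finset.card_filter_le _ _)
    omega
  obtain ⟨w, hw⟩ : ∃ w, w ∉ B := by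
    by_contra h
    push_neg at h
    have : B = Finset.univ := Finset.eq_univ_of_forall h
    rw [this, Finset.card_univ, Fintype.card_fin] at hcard
    omega
  have hsw : (s, w) ∉ F := by
    intro h
    exact hw (Finset.mem_union_left _ (Finset.mem_image.mpr ⟨(s, w),
      Finset.mem_filter.mpr ⟨h, rfl⟩, rfl⟩))
  have hwt : (w, t) ∉ F := by
    intro h
    exact hw (Finset.mem_union_right _ (Finset.mem_image.mpr ⟨(w, t),
      Finset.mem_filter.mpr ⟨h, rfl⟩, rfl⟩))
  refine ⟨fun a b => E a b ∨ (a = s ∧ b = w) ∨ (a = w ∧ b = t), ?_, ?_⟩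
  · intro p hp
    constructor
    · rintro (h | ⟨rfl, rfl⟩ | ⟨rfl, rfl⟩)
      · exact h
      · exact absurd hp hsw
      · exact absurd hp hwt
    · exact Or.inl
  · exact Relation.ReflTransGen.head (Or.inr (Or.inl ⟨rfl, rfl⟩))
      (Relation.ReflTransGen.single (Or.inr (Or.inr ⟨rfl, rfl⟩)))
end

section
/- For all natural numbers k and m with m ≥ 4k + 2, every binary relation E on Fin m, and every finite set F of ordered pairs of elements of Fin m with at most k elements, there exists a binary relation E' on Fin m that agrees with E on F and that admits a Hamiltonian E'-path from 0 to m−1 (the last element of Fin m). (This is the combinatorial content of the statement that the problem HamiltonianPathBetweenZeroAndMax is uniform; the paper asserts (4k, k)-uniformity, and the bound 4k+2 makes the paper's explicit construction go through.) -/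
/-- A Hamiltonian `E`-path from `a` to `b`: a duplicate-free list containing every
vertex, starting at `a`, ending at `b`, with consecutive entries related by `E`. -/
def IsHamPath {V : Type*} (E : V → V → Prop) (a b : V) (l : List V) : Prop :=
  l.Nodup ∧ (∀ v : V, v ∈ l) ∧ l.head? = some a ∧ l.getLast? = some b ∧ l.Chain' E

namespace ZMHP
variable {α : Type*}

def weave : List α → List α → List α
  | [], ys => ys
  | x :: xs, ys => x :: weave ys xs
  termination_by xs ys => xs.length + ys.length
  decreasing_by simp; omega

theorem weave_perm : ∀ xs ys : List α, List.Perm (weave xs ys) (xs ++ ys)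
  | [], ys => by simp [weave]
  | x :: xs, ys => by
      simp only [weave]
      exact ((weave_perm ys xs).cons x).trans
        (List.Perm.cons x List.perm_append_comm)
  termination_by xs ys => xs.length + ys.length
  decreasing_by simp; omega

theorem goodChain (R : α → α → Prop) (l' : List α) (hl' : l'.Chain' R)
    (hh : ∀ v, ∀ h : l' ≠ [], R v (l'.head h)) :
    ∀ (xs : List α) (c : α), (∀ x ∈ xs, ∀ v, R x v ∧ R v x) →
      (c :: (xs ++ l')).Chain' R
  | [], c, _ => by
      cases l' with
      | nil => exact List.isChain_singleton c
      | cons h t => exact List.isChain_cons_cons.mpr ⟨hh c (by simp), hl'⟩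
  | x :: xs, c, hg => by
      refine List.isChain_cons_cons.mpr ⟨(hg x (by simp) c).2, ?_⟩
      exact goodChain R l' hl' hh xs x (fun y hy => hg y (by simp [hy]))

theorem weave_chain (R : α → α → Prop) (l' : List α) (hl' : l'.Chain' R)
    (hh : ∀ v, ∀ h : l' ≠ [], R v (l'.head h)) :
    ∀ (ys xs : List α) (c : α), ys.length ≤ xs.length →
      (∀ x ∈ xs, ∀ v, R x v ∧ R v x) →
      (c :: (weave xs ys ++ l')).Chain' R
  | [], xs, c, _, hg => by
      cases xs with
      | nil => simpa [weave] using goodChain R l' hl' hh [] c (by simp)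
      | cons x xs =>
        have hw : weave (x :: xs) ([] : List α) = x :: xs := by simp [weave]
        rw [hw]; exact goodChain R l' hl' hh (x :: xs) c hg
  | y :: ys, xs, c, hlen, hg => by
      cases xs with
      | nil => simp at hlen
      | cons x xs' =>
        have hw : weave (x :: xs') (y :: ys) = x :: y :: weave xs' ys := by
          simp [weave]
        rw [hw]
        refine List.isChain_cons_cons.mpr ⟨(hg x (by simp) c).2, ?_⟩
        refine List.isChain_cons_cons.mpr ⟨(hg x (by simp) y).1, ?_⟩
        exact weave_chain R l' hl' hh ys xs' y (by simp at hlen; omega)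
          (fun a ha => hg a (by simp [ha]))

end ZMHP

namespace ZMHP

theorem helper {m : ℕ} (E' : Fin m → Fin m → Prop) (z e : Fin m)
    (M S : Finset (Fin m)) (l' : List (Fin m))
    (hgood : ∀ x ∈ S, ∀ v, E' x v ∧ E' v x)
    (hlen : M.card ≤ S.card)
    (hl' : l'.Chain' E')
    (hh : ∀ v, ∀ h : l' ≠ [], E' v (l'.head h))
    (hlast : l'.getLast? = some e)
    (hcover : ∀ v, v = z ∨ v ∈ M ∨ v ∈ S ∨ v ∈ l')
    (hnd : (z :: ((S.toList ++ M.toList) ++ l')).Nodup) :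
    ∃ l, IsHamPath E' z e l := by
  have hp : List.Perm (z :: (weave S.toList M.toList ++ l'))
      (z :: ((S.toList ++ M.toList) ++ l')) :=
    ((weave_perm S.toList M.toList).append_right l').cons z
  have hne : l' ≠ [] := by intro h; rw [h] at hlast; simp at hlast
  refine ⟨z :: (weave S.toList M.toList ++ l'), ?_, ?_, rfl, ?_, ?_⟩
  · exact hp.nodup_iff.mpr hnd
  · intro v
    rw [hp.mem_iff]
    rcases hcover v with h | h | h | h
    · simp [h]
    · simp [Finset.mem_toList.mpr h]
    · simp [Finset.mem_toList.mpr h]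
    · simp [h]
  · show (([z] ++ (weave S.toList M.toList ++ l')).getLast? = some e)
    rw [List.getLast?_append, List.getLast?_append] ; simp [hlast, hne]
  · exact weave_chain E' l' hl' hh M.toList S.toList z
      (by simpa using hlen)
      (fun x hx => hgood x (Finset.mem_toList.mp hx))

end ZMHP

theorem zeroMaxHP_uniform (k m : ℕ) (hm : 4 * k + 2 ≤ m)
    (E : Fin m → Fin m → Prop) (F : Finset (Fin m × Fin m)) (hF : F.card ≤ k) :
    ∃ E' : Fin m → Fin m → Prop,
      (∀ p ∈ F, (E' p.1 p.2 ↔ E p.1 p.2)) ∧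
      ∃ l : List (Fin m),
        IsHamPath E' (⟨0, by omega⟩ : Fin m) (⟨m - 1, by omega⟩ : Fin m) l := by
  set z : Fin m := ⟨0, by omega⟩ with hzdef
  set e : Fin m := ⟨m - 1, by omega⟩ with hedef
  have hze : z ≠ e := by
    simp only [hzdef, hedef, Ne, Fin.mk.injEq]; omega
  set T : Finset (Fin m) := F.image Prod.fst ∪ F.image Prod.snd with hTdef
  set E' : Fin m → Fin m → Prop := fun x y => x ∉ T ∨ y ∉ T ∨ E x y with hE'def
  have hagree : ∀ p ∈ F, (E' p.1 p.2 ↔ E p.1 p.2) := by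
    intro p hp
    have h1 : p.1 ∈ T := Finset.mem_union_left _ (Finset.mem_image.mpr ⟨p, hp, rfl⟩)
    have h2 : p.2 ∈ T := Finset.mem_union_right _ (Finset.mem_image.mpr ⟨p, hp, rfl⟩)
    constructor
    · rintro (h | h | h) <;> first | exact absurd h1 h | exact absurd h2 h | exact h
    · exact fun h => Or.inr (Or.inr h)
  have hgoodE' : ∀ x, x ∉ T → ∀ v, E' x v ∧ E' v x :=
    fun x hx v => ⟨Or.inl hx, Or.inr (Or.inl hx)⟩
  have hTcard : T.card ≤ 2 * k := by
    calc T.card ≤ (F.image Prod.fst).card + (F.image Prod.snd).card :=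
          Finset.card_union_le _ _
      _ ≤ F.card + F.card := Nat.add_le_add (Finset.card_image_le) (Finset.card_image_le)
      _ ≤ 2 * k := by omega
  set M : Finset (Fin m) := (T.erase z).erase e with hMdef
  have hMz : z ∉ M := fun h => (Finset.mem_erase.mp (Finset.mem_of_mem_erase h)).1 rfl
  have hMe : e ∉ M := fun h => (Finset.mem_erase.mp h).1 rfl
  have hMT : ∀ x ∈ M, x ∈ T := fun x hx =>
    Finset.mem_of_mem_erase (Finset.mem_of_mem_erase hx)
  have hTM : ∀ t ∈ T, t = z ∨ t = e ∨ t ∈ M := by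
    intro t ht
    by_cases h1 : t = z
    · exact Or.inl h1
    by_cases h2 : t = e
    · exact Or.inr (Or.inl h2)
    · exact Or.inr (Or.inr (Finset.mem_erase.mpr ⟨h2, Finset.mem_erase.mpr ⟨h1, ht⟩⟩))
  have hMcard : M.card ≤ 2 * k :=
    le_trans (le_trans (Finset.card_erase_le) (Finset.card_erase_le)) hTcard
  set Bc : Finset (Fin m) := (insert z (insert e M))ᶜ with hBcdef
  have hzi : z ∉ insert e M := by simp [hze, hMz]
  have hins_card : (insert z (insert e M)).card = M.card + 2 := by
    rw [Finset.card_insert_of_notMem hzi, Finset.card_insert_of_notMem hMe]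
  have hBc_card : Bc.card = m - (M.card + 2) := by
    rw [hBcdef, Finset.card_compl, hins_card, Fintype.card_fin]
  have hBc_notT : ∀ x ∈ Bc, x ∉ T := by
    intro x hx hxT
    have hx' : x ∉ insert z (insert e M) := Finset.mem_compl.mp hx
    rcases hTM x hxT with h | h | h <;> simp [h] at hx'
  have hzBc : z ∉ Bc := by simp [hBcdef]
  have heBc : e ∉ Bc := by simp [hBcdef]
  have hMBc : ∀ x ∈ M, x ∉ Bc := fun x hx h => hBc_notT x h (hMT x hx)
  refine ⟨E', hagree, ?_⟩
  by_cases he : e ∈ T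
  · -- e touched: M.card ≤ 2k - 1, pull one b out of Bc for the tail [b, e]
    have heM : e ∈ T.erase z := Finset.mem_erase.mpr ⟨fun h => hze h.symm, he⟩
    have hM1 : M.card + 1 ≤ 2 * k := by
      have h1 : M.card = (T.erase z).card - 1 := Finset.card_erase_of_mem heM
      have h2 : (T.erase z).card ≤ T.card := Finset.card_erase_le
      have h3 : 1 ≤ (T.erase z).card := Finset.card_pos.mpr ⟨e, heM⟩
      omega
    have hBcpos : 0 < Bc.card := by rw [hBc_card]; omega
    obtain ⟨b, hb⟩ := Finset.card_pos.mp hBcpos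
    have hbT : b ∉ T := hBc_notT b hb
    refine ZMHP.helper E' z e M (Bc.erase b) [b, e]
      (fun x hx => hgoodE' x (hBc_notT x (Finset.mem_of_mem_erase hx)))
      ?_ ?_ ?_ (by simp) ?_ ?_
    · rw [Finset.card_erase_of_mem hb, hBc_card]; omega
    · exact List.isChain_pair.mpr ((hgoodE' b hbT e).1)
    · intro v h; exact (hgoodE' b hbT v).2
    · intro v
      by_cases hv : v ∈ Bc
      · by_cases hvb : v = b
        · simp [hvb]
        · exact Or.inr (Or.inr (Or.inl (Finset.mem_erase.mpr ⟨hvb, hv⟩)))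
      · have : v ∈ insert z (insert e M) := by
          by_contra h; exact hv (Finset.mem_compl.mpr h)
        simp only [Finset.mem_insert] at this
        rcases this with h | h | h
        · exact Or.inl h
        · simp [h]
        · exact Or.inr (Or.inl h)
    · -- Nodup
      have hbe : b ≠ e := fun h => heBc (h ▸ hb)
      have hbz : b ≠ z := fun h => hzBc (h ▸ hb)
      have hbM : b ∉ M := fun h => hMBc b h hb
      simp only [List.nodup_cons, List.nodup_append', List.mem_append, List.mem_cons,
        List.mem_singleton, Finset.mem_toList, List.disjoint_left, List.not_mem_nil,
        List.nodup_nil, not_or, Finset.mem_erase]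
      refine ⟨⟨⟨fun h => hzBc h.2, hMz⟩, fun h => hbz h.symm, hze, not_false⟩,
        ⟨Finset.nodup_toList _, Finset.nodup_toList _,
          fun a ha hM => hMBc a hM ha.2⟩,
        ⟨⟨hbe, not_false⟩, not_false, trivial⟩, ?_⟩
      rintro a (⟨hab, haBc⟩ | haM)
      · exact ⟨hab, fun h => heBc (h ▸ haBc), not_false⟩
      · exact ⟨fun h => hbM (h ▸ haM), fun h => hMe (h ▸ haM), not_false⟩
  · -- e untouched: tail is just [e]
    refine ZMHP.helper E' z e M Bc [e]
      (fun x hx => hgoodE' x (hBc_notT x hx))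
      ?_ (List.isChain_singleton e) ?_ (by simp) ?_ ?_
    · rw [hBc_card]; omega
    · intro v h; exact (hgoodE' e he v).2
    · intro v
      by_cases hv : v ∈ Bc
      · exact Or.inr (Or.inr (Or.inl hv))
      · have : v ∈ insert z (insert e M) := by
          by_contra h; exact hv (Finset.mem_compl.mpr h)
        simp only [Finset.mem_insert] at this
        rcases this with h | h | h
        · exact Or.inl h
        · simp [h]
        · exact Or.inr (Or.inl h)
    · simp only [List.nodup_cons, List.nodup_append', List.mem_append, List.mem_cons,
        List.mem_singleton, Finset.mem_toList, List.disjoint_left, List.not_mem_nil,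
        List.nodup_nil, not_or]
      refine ⟨⟨⟨hzBc, hMz⟩, hze, not_false⟩,
        ⟨Finset.nodup_toList _, Finset.nodup_toList _, fun a ha hM => hMBc a hM ha⟩,
        ⟨not_false, trivial⟩, ?_⟩
      rintro a (ha | ha)
      · exact ⟨fun h => heBc (h ▸ ha), not_false⟩
      · exact ⟨fun h => hMe (h ▸ ha), not_false⟩
end

section
/- For all natural numbers k and m with m ≥ 2k + 6, every simple graph G on Fin m, and every finite set F of unordered pairs (elements of Sym2 (Fin m)) with at most k elements, there exists a simple graph G' on Fin m such that every pair e ∈ F is an edge of G' iff it is an edge of G, and such that for every 2-coloring c : Sym2 (Fin m) → Bool, G' has a monochromatic triangle under c. (This is the combinatorial content of the statement that the problem coMonoTriangle is (2k+6, k)-uniform.) -/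
/-- `G` has a monochromatic triangle under the 2-coloring `c`: three pairwise distinct,
pairwise adjacent vertices whose three connecting pairs receive the same color. -/
def HasMonoTriangle {V : Type*} (G : SimpleGraph V) (c : Sym2 V → Bool) : Prop :=
  ∃ x y z : V, x ≠ y ∧ y ≠ z ∧ x ≠ z ∧
    G.Adj x y ∧ G.Adj y z ∧ G.Adj x z ∧
    c s(x, y) = c s(y, z) ∧ c s(y, z) = c s(x, z)

/-- Ramsey R(3,3) ≤ 6: among six distinct vertices, any 2-coloring of pairs
has a monochromatic triangle. -/
lemma six_mono {V : Type*} (c : Sym2 V → Bool) (v : Fin 6 → V)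
    (hv : Function.Injective v) :
    ∃ i j l : Fin 6, i ≠ j ∧ j ≠ l ∧ i ≠ l ∧
      c s(v i, v j) = c s(v j, v l) ∧ c s(v j, v l) = c s(v i, v l) := by
  classical
  obtain ⟨col, -, hcol⟩ :=
    Finset.exists_lt_card_fiber_of_mul_lt_card_of_maps_to
      (s := (Finset.univ : Finset (Fin 6)).erase 0)
      (t := (Finset.univ : Finset Bool))
      (f := fun i => c s(v 0, v i)) (n := 2)
      (by intro x _; exact Finset.mem_univ _)
      (by simp)
  obtain ⟨a, b, d, ha, hb, hd, hab, had, hbd⟩ := Finset.two_lt_card_iff.mp hcol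
  simp only [Finset.mem_filter, Finset.mem_erase] at ha hb hd
  obtain ⟨⟨ha0, -⟩, hca⟩ := ha
  obtain ⟨⟨hb0, -⟩, hcb⟩ := hb
  obtain ⟨⟨hd0, -⟩, hcd⟩ := hd
  by_cases h1 : c s(v a, v b) = col
  · exact ⟨a, 0, b, ha0, hb0.symm, hab, by
      rw [Sym2.eq_swap (a := v a)]; rw [hca, hcb], by rw [hcb, h1]⟩
  by_cases h2 : c s(v a, v d) = col
  · exact ⟨a, 0, d, ha0, hd0.symm, had, by
      rw [Sym2.eq_swap (a := v a)]; rw [hca, hcd], by rw [hcd, h2]⟩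
  by_cases h3 : c s(v b, v d) = col
  · exact ⟨b, 0, d, hb0, hd0.symm, hbd, by
      rw [Sym2.eq_swap (a := v b)]; rw [hcb, hcd], by rw [hcd, h3]⟩
  · refine ⟨a, b, d, hab, hbd, had, ?_, ?_⟩
    · cases col <;> simp_all
    · cases col <;> simp_all

theorem coMonoTriangle_uniform (k m : ℕ) (hm : 2 * k + 6 ≤ m)
    (G : SimpleGraph (Fin m)) (F : Finset (Sym2 (Fin m))) (hF : F.card ≤ k) :
    ∃ G' : SimpleGraph (Fin m),
      (∀ e ∈ F, (e ∈ G'.edgeSet ↔ e ∈ G.edgeSet)) ∧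
      ∀ c : Sym2 (Fin m) → Bool, HasMonoTriangle G' c := by
  classical
  -- support of F
  set supp : Finset (Fin m) := F.biUnion (fun e => Finset.univ.filter (· ∈ e)) with hsupp
  have hsuppcard : supp.card ≤ 2 * k := by
    calc supp.card ≤ ∑ e ∈ F, (Finset.univ.filter (· ∈ e)).card :=
          Finset.card_biUnion_le
      _ ≤ ∑ _e ∈ F, 2 := by
          refine Finset.sum_le_sum fun e _ => ?_
          induction e with
          | h x y =>
            refine Finset.card_le_card ?_ |>.trans (Finset.card_insert_le x {y})
              |>.trans (by simp)
            intro z hz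
            simp only [Finset.mem_filter, Sym2.mem_iff] at hz
            rcases hz.2 with h | h <;> simp [h]
      _ = 2 * F.card := by rw [Finset.sum_const, smul_eq_mul, mul_comm]
      _ ≤ 2 * k := by omega
  -- find 6 vertices outside supp
  have hcompl : 6 ≤ (Finset.univ \ supp).card := by
    have := Finset.card_sdiff_add_card_eq_card (Finset.subset_univ supp)
    simp only [Finset.card_univ, Fintype.card_fin] at this
    omega
  obtain ⟨t, hts, htc⟩ := Finset.exists_subset_card_eq hcompl
  have htsupp : ∀ x ∈ t, x ∉ supp := fun x hx =>
    (Finset.mem_sdiff.mp (hts hx)).2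
  -- the graph
  let G' : SimpleGraph (Fin m) :=
    { Adj := fun x y => (G.Adj x y ∧ s(x, y) ∈ F) ∨ (x ≠ y ∧ x ∈ t ∧ y ∈ t)
      symm := by
        constructor
        intro x y h
        rcases h with ⟨h1, h2⟩ | ⟨h1, h2, h3⟩
        · exact Or.inl ⟨h1.symm, by rwa [Sym2.eq_swap]⟩
        · exact Or.inr ⟨h1.symm, h3, h2⟩
      loopless := by
        constructor
        intro x h
        rcases h with ⟨h1, -⟩ | ⟨h1, -⟩
        · exact G.irrefl h1
        · exact h1 rfl }
  refine ⟨G', ?_, ?_⟩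
  · intro e he
    induction e with
    | h x y =>
      rw [SimpleGraph.mem_edgeSet, SimpleGraph.mem_edgeSet]
      constructor
      · rintro (⟨h1, -⟩ | ⟨-, h2, -⟩)
        · exact h1
        · exact absurd (Finset.mem_biUnion.mpr ⟨s(x, y), he, by simp⟩) (htsupp x h2)
      · intro h
        exact Or.inl ⟨h, he⟩
  · intro c
    have : ∃ v : Fin 6 → Fin m, Function.Injective v ∧ ∀ i, v i ∈ t := by
      have e := t.equivFinOfCardEq htc
      exact ⟨fun i => (e.symm i : Fin m), fun i j h => by
        have := Subtype.ext h; simpa using e.symm.injective this,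
        fun i => (e.symm i).2⟩
    obtain ⟨v, hvinj, hvt⟩ := this
    obtain ⟨i, j, l, hij, hjl, hil, h1, h2⟩ := six_mono c v hvinj
    exact ⟨v i, v j, v l, fun h => hij (hvinj h), fun h => hjl (hvinj h),
      fun h => hil (hvinj h),
      Or.inr ⟨fun h => hij (hvinj h), hvt i, hvt j⟩,
      Or.inr ⟨fun h => hjl (hvinj h), hvt j, hvt l⟩,
      Or.inr ⟨fun h => hil (hvinj h), hvt i, hvt l⟩, h1, h2⟩
end

section
/- Let m and N be natural numbers with m ≥ 1 and N ≥ 1, and let E be a binary relation on Fin m. Define the binary relation E_N on Fin m × Fin N by: E_N (a,i) (b,j) holds iff either i = j and E a b holds, or the natural number underlying j equals the natural number underlying i plus 1, a = m−1 (the last element of Fin m) and b = 0. Then E_N admits a Hamiltonian E_N-path from (0, 0) to (m−1, N−1) if and only if E admits a Hamiltonian E-path from 0 to m−1. (This is the combinatorial core of the paper's autoreduction of HamiltonianPathBetweenZeroAndMax: chaining N copies of a graph by linking the last vertex of each copy to the first vertex of the next preserves and reflects the existence of the required Hamiltonian path.) -/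
private lemma flatten_getLast?' {α : Type*} :
    ∀ {LL : List (List α)} {l : List α}, LL.getLast? = some l → l ≠ [] →
      LL.flatten.getLast? = l.getLast? := by
  intro LL
  induction LL with
  | nil => intro l h _; simp at h
  | cons B LL ih =>
    intro l h hl
    cases LL with
    | nil =>
      simp only [List.getLast?_singleton, Option.some.injEq] at h
      subst h; simp
    | cons C LL' =>
      rw [List.getLast?_cons_cons] at h
      have h2 := ih h hl
      have hne : (C :: LL').flatten ≠ [] := by
        intro he
        rw [he] at h2
        simp only [List.getLast?_nil] at h2
        exact hl (List.getLast?_eq_none_iff.mp h2.symm)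
      rw [List.flatten_cons, List.getLast?_append_of_ne_nil _ hne, h2]

private lemma chain'_fst' {α β : Type*} {R : α × β → α × β → Prop} {S : α → α → Prop} {c : β}
    (h : ∀ p q : α × β, p.2 = c → q.2 = c → R p q → S p.1 q.1) :
    ∀ {P : List (α × β)}, (∀ p ∈ P, p.2 = c) → List.Chain' R P →
      List.Chain' S (P.map Prod.fst) := by
  intro P
  induction P with
  | nil => simp [List.Chain']
  | cons a P ih =>
    intro hc hch
    cases P with
    | nil => simp [List.Chain']
    | cons b P' =>
      rw [List.Chain', List.isChain_cons_cons] at hch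
      rw [List.map_cons, List.map_cons, List.Chain', List.isChain_cons_cons]
      refine ⟨h a b (hc a (by simp)) (hc b (by simp)) hch.1, ?_⟩
      rw [← List.map_cons]
      exact ih (fun p hp => hc p (List.mem_cons_of_mem _ hp)) hch.2

theorem zeroMaxHP_chain (m N : ℕ) (hm : 1 ≤ m) (hN : 1 ≤ N)
    (E : Fin m → Fin m → Prop) :
    (∃ l : List (Fin m × Fin N),
        IsHamPath
          (fun p q : Fin m × Fin N =>
            (p.2 = q.2 ∧ E p.1 q.1) ∨
            ((q.2 : ℕ) = (p.2 : ℕ) + 1 ∧ p.1 = (⟨m - 1, by omega⟩ : Fin m) ∧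
              q.1 = (⟨0, by omega⟩ : Fin m)))
          ((⟨0, by omega⟩ : Fin m), (⟨0, by omega⟩ : Fin N))
          ((⟨m - 1, by omega⟩ : Fin m), (⟨N - 1, by omega⟩ : Fin N)) l) ↔
    (∃ l : List (Fin m), IsHamPath E (⟨0, by omega⟩ : Fin m) (⟨m - 1, by omega⟩ : Fin m) l) := by
  classical
  set z : Fin N := ⟨0, by omega⟩ with hz
  set EN : Fin m × Fin N → Fin m × Fin N → Prop := fun p q =>
    (p.2 = q.2 ∧ E p.1 q.1) ∨
      ((q.2 : ℕ) = (p.2 : ℕ) + 1 ∧ p.1 = (⟨m - 1, by omega⟩ : Fin m) ∧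
        q.1 = (⟨0, by omega⟩ : Fin m)) with hEN
  constructor
  · rintro ⟨L, hnd, hmem, hhead, hlast, hch⟩
    set p : Fin m × Fin N → Bool := fun x => decide (x.2 = z) with hp
    set P := L.takeWhile p with hPdef
    set D := L.dropWhile p with hDdef
    have hPD : P ++ D = L := List.takeWhile_append_dropWhile (p := p) (l := L)
    -- layers are monotone
    have hle : List.Chain' (fun x y : Fin m × Fin N => (x.2 : ℕ) ≤ (y.2 : ℕ)) L := by
      refine hch.imp ?_
      rintro x y (⟨h1, -⟩ | ⟨h1, -, -⟩)
      · rw [h1]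
      · omega
    haveI : IsTrans (Fin m × Fin N) (fun x y => (x.2 : ℕ) ≤ (y.2 : ℕ)) :=
      ⟨fun _ _ _ => le_trans⟩
    have hpw : List.Pairwise (fun x y : Fin m × Fin N => (x.2 : ℕ) ≤ (y.2 : ℕ)) L :=
      List.isChain_iff_pairwise.mp hle
    have hP0 : ∀ x ∈ P, x.2 = z := by
      intro x hx
      have := List.mem_takeWhile_imp hx
      simpa [hp] using this
    have hD0 : ∀ x ∈ D, x.2 ≠ z := by
      cases hDe : D with
      | nil => simp
      | cons d D' =>
        have hdne : L.dropWhile p ≠ [] := by rw [← hDdef, hDe]; simp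
        have hd : ¬ (d.2 = z) := by
          have := List.head_dropWhile_not p hdne
          have hh : (L.dropWhile p).head hdne = d := by
            have : L.dropWhile p = d :: D' := by rw [← hDdef, hDe]
            simp [this]
          rw [hh] at this
          simpa [hp] using this
        have hd1 : 1 ≤ (d.2 : ℕ) := by
          rcases Nat.eq_zero_or_pos (d.2 : ℕ) with h0 | h1
          · exact absurd (Fin.ext (by simp [hz, h0])) hd
          · exact h1
        rw [← hPD] at hpw
        have hpwD := (List.pairwise_append.mp hpw).2.1
        rw [hDe, List.pairwise_cons] at hpwD
        intro x hx hx0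
        have hx1 : (x.2 : ℕ) = 0 := by rw [hx0]
        rcases List.mem_cons.mp hx with rfl | hx'
        · omega
        · have := hpwD.1 x hx'; omega
    have hPne : P ≠ [] := by
      cases hLe : L with
      | nil => rw [hLe] at hhead; simp at hhead
      | cons a t =>
        have ha : a = ((⟨0, by omega⟩ : Fin m), z) := by
          rw [hLe] at hhead; simpa [hz] using hhead
        have : P = a :: t.takeWhile p := by
          rw [hPdef, hLe, List.takeWhile_cons_of_pos (by simp [hp, ha])]
        simp [this]
    have hheadP : P.head? = some ((⟨0, by omega⟩ : Fin m), z) := by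
      cases hLe : L with
      | nil => rw [hLe] at hhead; simp at hhead
      | cons a t =>
        have ha : a = ((⟨0, by omega⟩ : Fin m), z) := by
          rw [hLe] at hhead; simpa [hz] using hhead
        have : P = a :: t.takeWhile p := by
          rw [hPdef, hLe, List.takeWhile_cons_of_pos (by simp [hp, ha])]
        rw [this, List.head?_cons, ha]
    -- last of P has first component m-1
    have hlastP : P.getLast? = some ((⟨m - 1, by omega⟩ : Fin m), (P.getLast hPne).2) := by
      rw [List.getLast?_eq_getLast hPne]
      congr 1
      have hmem' : P.getLast hPne ∈ P := List.getLast_mem hPne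
      cases hDe : D with
      | nil =>
        have hPL : P = L := by rw [← hPD, hDe, List.append_nil]
        have : L.getLast? = some ((⟨m - 1, by omega⟩ : Fin m), (⟨N - 1, by omega⟩ : Fin N)) :=
          hlast
        rw [← hPL, List.getLast?_eq_getLast hPne, Option.some.injEq] at this
        rw [this]
      | cons d D' =>
        rw [← hPD] at hch
        have hedge := (List.isChain_append.mp hch).2.2
        have hE : EN (P.getLast hPne) d := by
          apply hedge
          · rw [List.getLast?_eq_getLast hPne]; rfl
          · rw [hDe]; rfl
        have hd : d.2 ≠ z := hD0 d (by rw [hDe]; simp)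
        rcases hE with ⟨h1, -⟩ | ⟨-, h2, -⟩
        · exact absurd (h1 ▸ hP0 _ hmem') hd
        · exact Prod.ext h2 rfl
    refine ⟨P.map Prod.fst, ?_, ?_, ?_, ?_, ?_⟩
    · refine List.Nodup.map_on ?_ ?_
      · intro x hx y hy hxy
        exact Prod.ext hxy (by rw [hP0 x hx, hP0 y hy])
      · rw [← hPD] at hnd
        exact hnd.of_append_left
    · intro v
      have hv := hmem (v, z)
      rw [← hPD, List.mem_append] at hv
      rcases hv with hv | hv
      · exact List.mem_map.mpr ⟨(v, z), hv, rfl⟩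
      · exact absurd rfl (hD0 _ hv)
    · rw [List.head?_map, hheadP]; rfl
    · rw [List.getLast?_map, hlastP]; rfl
    · refine chain'_fst' (R := EN) (c := z) ?_ hP0 ?_
      · rintro x y hx hy (⟨-, h2⟩ | ⟨h1, -, -⟩)
        · exact h2
        · rw [hx, hy] at h1; simp [hz] at h1
      · rw [← hPD] at hch
        exact (List.isChain_append.mp hch).1
  · rintro ⟨l, hnd, hmem, hhead, hlast, hch⟩
    have hlne : l ≠ [] := by intro h; rw [h] at hhead; simp at hhead
    set block : Fin N → List (Fin m × Fin N) := fun i => l.map (fun v => (v, i)) with hb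
    have hbne : ∀ i, block i ≠ [] := by intro i; simp [hb, hlne]
    have hnil : [] ∉ (List.finRange N).map block := by
      intro h
      rcases List.mem_map.mp h with ⟨i, -, hi⟩
      exact hbne i hi
    have hmemb : ∀ (x : Fin m × Fin N) (i : Fin N), x ∈ block i → x.2 = i := by
      intro x i hx
      rcases List.mem_map.mp hx with ⟨v, -, rfl⟩
      rfl
    refine ⟨((List.finRange N).map block).flatten, ?_, ?_, ?_, ?_, ?_⟩
    · rw [List.nodup_flatten]
      constructor
      · intro B hB
        rcases List.mem_map.mp hB with ⟨i, -, rfl⟩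
        exact hnd.map (fun a b hab => (Prod.mk.injEq _ _ _ _ ▸ hab).1)
      · rw [List.pairwise_map]
        refine (List.nodup_finRange N).imp ?_
        intro i j hij
        rw [List.disjoint_left]
        intro x hxi hxj
        exact hij ((hmemb x i hxi) ▸ (hmemb x j hxj))
    · rintro ⟨v, i⟩
      rw [List.mem_flatten]
      exact ⟨block i, List.mem_map.mpr ⟨i, List.mem_finRange i, rfl⟩,
        List.mem_map.mpr ⟨v, hmem v, rfl⟩⟩
    · obtain ⟨n, rfl⟩ : ∃ n, N = n + 1 := ⟨N - 1, by omega⟩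
      rw [List.finRange_succ, List.map_cons, List.flatten_cons,
        List.head?_append_of_ne_nil _ (hbne 0)]
      rw [hb]
      simp only [List.head?_map, hhead, Option.map_some]
      rfl
    · have hfr : (List.finRange N).getLast? = some (⟨N - 1, by omega⟩ : Fin N) := by
        have hfne : List.finRange N ≠ [] := by
          rw [← List.length_pos_iff_ne_nil, List.length_finRange]; omega
        rw [List.getLast?_eq_getLast hfne, List.getLast_eq_getElem]
        simp [List.get_finRange, List.length_finRange]
      have hLL : ((List.finRange N).map block).getLast? =
          some (block (⟨N - 1, by omega⟩ : Fin N)) := by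
        rw [List.getLast?_map, hfr]; rfl
      rw [flatten_getLast?' hLL (hbne _), hb]
      simp only [List.getLast?_map, hlast, Option.map_some]
    · rw [List.Chain', List.isChain_flatten hnil]
      constructor
      · intro B hB
        rcases List.mem_map.mp hB with ⟨i, -, rfl⟩
        rw [hb, List.isChain_map]
        refine hch.imp ?_
        intro a b hab
        exact Or.inl ⟨rfl, hab⟩
      · rw [List.isChain_map]
        have hsucc : List.Chain' (fun i j : Fin N => (j : ℕ) = (i : ℕ) + 1)
            (List.finRange N) := by
          rw [List.Chain', List.isChain_iff_getElem]
          intro i h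
          simp [List.get_finRange]
        refine hsucc.imp ?_
        intro i j hij x hx y hy
        rw [hb] at hx hy
        rw [List.getLast?_map, hlast, Option.map_some, Option.mem_def,
          Option.some.injEq] at hx
        rw [List.head?_map, hhead, Option.map_some, Option.mem_def,
          Option.some.injEq] at hy
        subst hx; subst hy
        exact Or.inr ⟨hij, rfl, rfl⟩
end

section
/- Let E be a binary relation on a type α, let U be a set of elements of α, and let β be any type. Define the binary relation E₂ on α ⊕ β by: E₂ (inl a) (inl a') holds iff E a a' holds, and E₂ x y is false whenever x or y lies in the right summand; define U₂ to be the image of U under inl. Then for all s, t ∈ α, AltReach E₂ U₂ (inl s) (inl t) holds if and only if AltReach E U s t holds. (This is the combinatorial core of the paper's padding autoreduction for AltReach: adding isolated existential vertices to an alternating graph preserves and reflects alternating reachability between the original vertices.) -/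
/-- Alternating reachability: the least relation `R` such that (i) `R u u`;
(ii) if `u` is existential (`u ∉ U`), `E u v` and `R v w` then `R u w`;
(iii) if `u` is universal (`u ∈ U`), `u` has at least one outgoing edge, and `R v w`
holds for every successor `v` of `u`, then `R u w`. -/
inductive AltReach {V : Type*} (E : V → V → Prop) (U : Set V) : V → V → Prop
  | refl (u : V) : AltReach E U u u
  | exist {u v w : V} : u ∉ U → E u v → AltReach E U v w → AltReach E U u w
  | univ {u w : V} : u ∈ U → (∃ v, E u v) → (∀ v, E u v → AltReach E U v w) →
      AltReach E U u w

theorem altReach_padding {α β : Type*} (E : α → α → Prop) (U : Set α) (s t : α) :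
    AltReach
      (fun x y : α ⊕ β =>
        match x, y with
        | Sum.inl a, Sum.inl a' => E a a'
        | _, _ => False)
      (Sum.inl '' U) (Sum.inl s) (Sum.inl t) ↔
    AltReach E U s t := by
  set E₂ : α ⊕ β → α ⊕ β → Prop := fun x y =>
    match x, y with
    | Sum.inl a, Sum.inl a' => E a a'
    | _, _ => False with hE₂
  constructor
  · intro h
    have key : ∀ x y, AltReach E₂ (Sum.inl '' U) x y →
        ∀ a b : α, x = Sum.inl a → y = Sum.inl b → AltReach E U a b := by
      intro x y h
      induction h with
      | refl u =>
        rintro a b rfl h2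
        cases h2
        exact AltReach.refl a
      | exist hu he _ ih =>
        rename_i u v w _
        rintro a b rfl rfl
        cases v with
        | inl v' =>
          exact AltReach.exist (fun hmem => hu ⟨a, hmem, rfl⟩) he (ih v' b rfl rfl)
        | inr v' => exact he.elim
      | univ hu hex hall ih =>
        rename_i u w
        rintro a b rfl rfl
        obtain ⟨a', hmem, heq⟩ := hu
        cases heq
        obtain ⟨v, hv⟩ := hex
        cases v with
        | inr v' => exact hv.elim
        | inl v' =>
          refine AltReach.univ hmem ⟨v', hv⟩ fun c hc => ?_
          exact ih (Sum.inl c) hc c b rfl rfl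
    exact key _ _ h s t rfl rfl
  · intro h
    induction h with
    | refl u => exact AltReach.refl _
    | exist hu he _ ih =>
      exact AltReach.exist (fun ⟨a, hmem, heq⟩ => hu (Sum.inl_injective heq ▸ hmem)) he ih
    | univ hu hex hall ih =>
      obtain ⟨v, hv⟩ := hex
      refine AltReach.univ ⟨_, hu, rfl⟩ ⟨Sum.inl v, hv⟩ fun c hc => ?_
      cases c with
      | inl c' => exact ih c' hc
      | inr c' => exact hc.elim
end
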